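/- Let X be a symmetric α-stable process on R^n (0 < α < 2, n ≥ 2) and let D be a bounded domain satisfying the uniform exterior cone condition. If h is a bounded function on D that is harmonic in D with respect to the killed process X^D (i.e., the process killed upon exiting D), then h is identically zero on D. -/

import Mathlib

open MeasureTheory Metric Filter Set Topology
open scoped ENNReal NNReal Topology

noncomputable section

/-- Euclidean space `ℝⁿ`. -/
abbrev EucSp (n : ℕ) := EuclideanSpace ℝ (Fin n)

variable {n : ℕ}

/-- The first exit time of a path `ω` from a set `U` (`∞` if the path never leaves `U`). -/
def exitTime (U : Set (EucSp n)) (ω : ℝ≥0 → EucSp n) : ℝ≥0∞ :=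
  ⨅ s ∈ {s : ℝ≥0 | ω s ∉ U}, (s : ℝ≥0∞)

/-- The position of the path at the exit time from `U`. -/
def exitPos (U : Set (EucSp n)) (ω : ℝ≥0 → EucSp n) : EucSp n :=
  ω (exitTime U ω).toNNReal

/-- The Poisson kernel of the ball `B(c,r)` for the rotationally symmetric `α`-stable
process (Blumenthal–Getoor–Ray):
`K(x,z) = C(n,α) ((r²-|x-c|²)/(|z-c|²-r²))^{α/2} |x-z|^{-n}` for `|z-c| > r`, `0` otherwise. -/
def stableBallKernel (n : ℕ) (α : ℝ) (c : EucSp n) (r : ℝ) (x z : EucSp n) : ℝ :=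
  if r < ‖z - c‖ then
    Real.Gamma ((n : ℝ) / 2) * Real.pi ^ (-(n : ℝ) / 2 - 1) * Real.sin (Real.pi * α / 2) *
      ((r ^ 2 - ‖x - c‖ ^ 2) / (‖z - c‖ ^ 2 - r ^ 2)) ^ (α / 2) * ‖x - z‖ ^ (-(n : ℝ))
  else 0

/-- An abstract symmetric `α`-stable process on `ℝⁿ`, described by the family of laws
`law x` on path space of the process started at `x`.  The exit distribution from any ball
is required to be given by the explicit Blumenthal–Getoor–Ray Poisson kernel, which pins
down the process. -/
structure StableProcessLaw (n : ℕ) (α : ℝ) where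
  law : EucSp n → Measure (ℝ≥0 → EucSp n)
  prob : ∀ x, IsProbabilityMeasure (law x)
  start : ∀ x, law x {ω | ω 0 = x} = 1
  ball_exit : ∀ (c : EucSp n) (r : ℝ), 0 < r → ∀ x ∈ ball c r,
    (law x).map (exitPos (ball c r)) =
      volume.withDensity fun z => ENNReal.ofReal (stableBallKernel n α c r x z)

/-- The harmonic measure of `U`: the law of `X_{τ_U}` under `P_x`. -/
def StableProcessLaw.hm {α : ℝ} (H : StableProcessLaw n α) (U : Set (EucSp n))
    (x : EucSp n) : Measure (EucSp n) :=
  (H.law x).map (exitPos U)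

/-- The Green function of the (transient) symmetric `α`-stable process on `ℝⁿ`:
`G(x,y) = 2^{-α} π^{-n/2} Γ((n-α)/2) Γ(α/2)⁻¹ |x-y|^{α-n}`. -/
def freeGreen (n : ℕ) (α : ℝ) (x y : EucSp n) : ℝ :=
  2 ^ (-α) * Real.pi ^ (-(n : ℝ) / 2) * Real.Gamma (((n : ℝ) - α) / 2) / Real.Gamma (α / 2) *
    ‖x - y‖ ^ (α - (n : ℝ))

/-- The Green function of the process killed upon leaving `D`:
`G_D(x,y) = G(x,y) - E_x[G(X_{τ_D},y)]`. -/
def killedGreen {α : ℝ} (H : StableProcessLaw n α) (D : Set (EucSp n)) (x y : EucSp n) : ℝ :=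
  freeGreen n α x y - ∫ z, freeGreen n α z y ∂(H.hm D x)

/-- The Martin quotient `M_D(x,y) = G_D(x,y)/G_D(x₀,y)` with base point `x₀`. -/
def martinQuot {α : ℝ} (H : StableProcessLaw n α) (D : Set (EucSp n)) (x₀ x y : EucSp n) : ℝ :=
  killedGreen H D x y / killedGreen H D x₀ y

/-- The Martin kernel at a boundary point `z`:
`M_D(x,z) = lim_{D ∋ y → z} G_D(x,y)/G_D(x₀,y)`. -/
def martinKernel {α : ℝ} (H : StableProcessLaw n α) (D : Set (EucSp n)) (x₀ x z : EucSp n) : ℝ :=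
  limUnder (𝓝[D] z) (martinQuot H D x₀ x)

/-- A bounded domain: a bounded, open, connected set. -/
def IsBoundedDomain (D : Set (EucSp n)) : Prop :=
  IsOpen D ∧ IsConnected D ∧ Bornology.IsBounded D

/-- A bounded Lipschitz domain: near every boundary point, after an isometric change of
coordinates, `D` is the region above the graph of a Lipschitz function (with uniform
characteristic constants `(r₀, A₀)`). -/
def IsLipschitzDomain [NeZero n] (D : Set (EucSp n)) : Prop :=
  IsBoundedDomain D ∧
  ∃ r₀ A₀ : ℝ, 0 < r₀ ∧ 0 < A₀ ∧
    ∀ z ∈ frontier D, ∃ (ψ : EucSp n ≃ₗᵢ[ℝ] EucSp n) (f : EucSp n → ℝ),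
      LipschitzWith (Real.toNNReal A₀) f ∧
      ∀ y ∈ ball z r₀,
        (y ∈ D ↔
          f (ψ (y - z) - (ψ (y - z) 0) • EuclideanSpace.single (0 : Fin n) (1 : ℝ))
            < ψ (y - z) 0)

/-- A bounded `C^{1,1}` domain: near every boundary point, after an isometric change of
coordinates, `D` is the region above the graph of a `C¹` function with Lipschitz gradient. -/
def IsC11Domain [NeZero n] (D : Set (EucSp n)) : Prop :=
  IsBoundedDomain D ∧
  ∃ r₀ : ℝ, 0 < r₀ ∧
    ∀ z ∈ frontier D, ∃ (ψ : EucSp n ≃ₗᵢ[ℝ] EucSp n) (f : EucSp n → ℝ) (M : ℝ≥0),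
      ContDiff ℝ 1 f ∧ LipschitzWith M (fderiv ℝ f) ∧
      ∀ y ∈ ball z r₀,
        (y ∈ D ↔
          f (ψ (y - z) - (ψ (y - z) 0) • EuclideanSpace.single (0 : Fin n) (1 : ℝ))
            < ψ (y - z) 0)

/-- The uniform exterior cone condition: there are `η, r > 0` such that at every boundary
point `z` there is a cone with vertex `z`, isometric to the standard cone of aperture `η`,
whose intersection with `B(z,r)` lies in `Dᶜ`. -/
def UniformExteriorCone [NeZero n] (D : Set (EucSp n)) : Prop :=
  ∃ η r : ℝ, 0 < η ∧ 0 < r ∧ ∀ z ∈ frontier D,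
    ∃ ψ : EucSp n ≃ₗᵢ[ℝ] EucSp n, ∀ y ∈ ball z r,
      (0 < ψ (y - z) 0 ∧
        ‖ψ (y - z) - (ψ (y - z) 0) • EuclideanSpace.single (0 : Fin n) (1 : ℝ)‖
          < η * ψ (y - z) 0) → y ∈ Dᶜ

/-- `h` is harmonic in `D` with respect to the whole process `X` (Definition 2.2):
continuous in `D`, locally integrable, with `∫_{|x|>1} |h(x)| |x|^{-(n+α)} dx < ∞`, and
satisfying the exact mean value property `h(x) = E_x[h(X_{τ_{B(x,r)}})]` for every ball with
closure contained in `D`. -/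
def HarmonicWrtX {α : ℝ} (H : StableProcessLaw n α) (D : Set (EucSp n))
    (h : EucSp n → ℝ) : Prop :=
  ContinuousOn h D ∧ LocallyIntegrable h volume ∧
  Integrable (fun x => |h x| * ‖x‖ ^ (-(n : ℝ) - α)) (volume.restrict {x : EucSp n | 1 < ‖x‖}) ∧
  ∀ x ∈ D, ∀ r : ℝ, 0 < r → closedBall x r ⊆ D →
    Integrable h (H.hm (ball x r) x) ∧ h x = ∫ y, h y ∂(H.hm (ball x r) x)

/-- `h` is superharmonic in `D` with respect to the whole process `X` (Definition 2.2):
lower semicontinuous in `D`, locally integrable, with `∫_{|x|>1}|h(x)||x|^{-(n+α)}dx < ∞`,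
and `h(x) ≥ E_x[h(X_{τ_{B(x,r)}})]` (in the extended sense) for every ball with closure in
`D`. -/
def SuperharmonicWrtX {α : ℝ} (H : StableProcessLaw n α) (D : Set (EucSp n))
    (h : EucSp n → ℝ) : Prop :=
  LowerSemicontinuousOn h D ∧ LocallyIntegrable h volume ∧
  Integrable (fun x => |h x| * ‖x‖ ^ (-(n : ℝ) - α)) (volume.restrict {x : EucSp n | 1 < ‖x‖}) ∧
  ∀ x ∈ D, ∀ r : ℝ, 0 < r → closedBall x r ⊆ D →
    Integrable (fun y => max (-(h y)) 0) (H.hm (ball x r) x) ∧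
    ((∫⁻ y, ENNReal.ofReal (h y) ∂(H.hm (ball x r) x) : ℝ≥0∞) : EReal)
      - ((∫⁻ y, ENNReal.ofReal (-(h y)) ∂(H.hm (ball x r) x) : ℝ≥0∞) : EReal) ≤ (h x : EReal)

/-- `h` is harmonic in `D` with respect to the killed process `X^D` (Definition 2.1):
continuous in `D`, locally integrable on `D`, with `∫_{D, |x|>1}|h(x)||x|^{-(n+α)}dx < ∞`,
and `h(x) = E_x[h(X_{τ_{B(x,r)}}); τ_{B(x,r)} < τ_D]` for every ball with closure in `D`
(the event `τ_{B(x,r)} < τ_D` being `X_{τ_{B(x,r)}} ∈ D`). -/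
def HarmonicWrtKilled {α : ℝ} (H : StableProcessLaw n α) (D : Set (EucSp n))
    (h : EucSp n → ℝ) : Prop :=
  ContinuousOn h D ∧ LocallyIntegrableOn h D volume ∧
  Integrable (fun x => |h x| * ‖x‖ ^ (-(n : ℝ) - α))
    (volume.restrict ({x : EucSp n | 1 < ‖x‖} ∩ D)) ∧
  ∀ x ∈ D, ∀ r : ℝ, 0 < r → closedBall x r ⊆ D →
    IntegrableOn h D (H.hm (ball x r) x) ∧ h x = ∫ y in D, h y ∂(H.hm (ball x r) x)

/-- `h` is superharmonic in `D` with respect to the killed process `X^D` (Definition 2.1). -/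
def SuperharmonicWrtKilled {α : ℝ} (H : StableProcessLaw n α) (D : Set (EucSp n))
    (h : EucSp n → ℝ) : Prop :=
  LowerSemicontinuousOn h D ∧ LocallyIntegrableOn h D volume ∧
  Integrable (fun x => |h x| * ‖x‖ ^ (-(n : ℝ) - α))
    (volume.restrict ({x : EucSp n | 1 < ‖x‖} ∩ D)) ∧
  ∀ x ∈ D, ∀ r : ℝ, 0 < r → closedBall x r ⊆ D →
    IntegrableOn (fun y => max (-(h y)) 0) D (H.hm (ball x r) x) ∧
    ((∫⁻ y in D, ENNReal.ofReal (h y) ∂(H.hm (ball x r) x) : ℝ≥0∞) : EReal)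
      - ((∫⁻ y in D, ENNReal.ofReal (-(h y)) ∂(H.hm (ball x r) x) : ℝ≥0∞) : EReal)
      ≤ (h x : EReal)

/-- The limit of the path at its lifetime (exit time from `D`), if it exists. -/
def pathBoundaryLimit (D : Set (EucSp n)) (ω : ℝ≥0 → EucSp n) : EucSp n :=
  limUnder (𝓝[{t : ℝ≥0 | (t : ℝ≥0∞) < exitTime D ω}] (exitTime D ω).toNNReal) ω


namespace Stmt5Aux

open scoped Pointwise

variable {n : ℕ} [NeZero n]

/-- Truncated cone set of aperture `η` and size `s`. -/
def W (n : ℕ) [NeZero n] (η s : ℝ) : Set (EucSp n) :=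
  {w | ‖w‖ < s ∧ 0 < w 0 ∧
    ‖w - (w 0) • EuclideanSpace.single (0 : Fin n) (1 : ℝ)‖ < η * w 0}

lemma isOpen_W (η s : ℝ) : IsOpen (W n η s) := by
  have hc0 : Continuous fun w : EucSp n => w 0 :=
    (EuclideanSpace.proj (0 : Fin n)).continuous
  have h1 : IsOpen {w : EucSp n | ‖w‖ < s} :=
    isOpen_lt continuous_norm continuous_const
  have h2 : IsOpen {w : EucSp n | 0 < w 0} := isOpen_lt continuous_const hc0
  have h3 : IsOpen {w : EucSp n |
      ‖w - (w 0) • EuclideanSpace.single (0 : Fin n) (1 : ℝ)‖ < η * w 0} :=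
    isOpen_lt ((continuous_id.sub (hc0.smul continuous_const)).norm)
      (continuous_const.mul hc0)
  exact h1.inter (h2.inter h3)

lemma measurableSet_W (η s : ℝ) : MeasurableSet (W n η s) :=
  (isOpen_W η s).measurableSet

lemma nonempty_W {η s : ℝ} (hη : 0 < η) (hs : 0 < s) : (W n η s).Nonempty := by
  refine ⟨(s/2) • EuclideanSpace.single (0 : Fin n) (1 : ℝ), ?_, ?_, ?_⟩
  · have : ‖EuclideanSpace.single (0 : Fin n) (1 : ℝ)‖ = 1 := by
      simp [EuclideanSpace.norm_single]
    rw [norm_smul, this, mul_one, Real.norm_eq_abs, abs_of_pos (by positivity : (0:ℝ) < s/2)]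
    linarith
  · show 0 < ((s/2) • EuclideanSpace.single (0 : Fin n) (1 : ℝ)) 0
    simp [EuclideanSpace.single_apply]
    positivity
  · have h0 : ((s/2) • EuclideanSpace.single (0 : Fin n) (1 : ℝ)) 0 = s/2 := by
      simp [EuclideanSpace.single_apply]
    rw [h0]
    rw [sub_self]
    simp
    positivity

lemma volume_W_pos {η s : ℝ} (hη : 0 < η) (hs : 0 < s) : 0 < volume (W n η s) :=
  (isOpen_W η s).measure_pos volume (nonempty_W hη hs)

lemma volume_W_lt_top {η s : ℝ} : volume (W n η s) < ⊤ :=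
  lt_of_le_of_lt (measure_mono (fun w hw => mem_ball_zero_iff.2 hw.1))
    measure_ball_lt_top

lemma smul_W_subset {η s : ℝ} (hs : 0 < s) : s • W n η 1 ⊆ W n η s := by
  rintro - ⟨w, ⟨hw1, hw2, hw3⟩, rfl⟩
  refine ⟨?_, ?_, ?_⟩
  · rw [norm_smul, Real.norm_eq_abs, abs_of_pos hs]
    nlinarith
  · show 0 < (s • w) 0
    have : (s • w) 0 = s * w 0 := rfl
    rw [this]; positivity
  · show ‖s • w - ((s • w) 0) • EuclideanSpace.single (0 : Fin n) (1 : ℝ)‖ < η * (s • w) 0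
    have h0 : (s • w) 0 = s * w 0 := rfl
    rw [h0]
    have : (s • w) - (s * w 0) • EuclideanSpace.single (0 : Fin n) (1 : ℝ)
        = s • (w - (w 0) • EuclideanSpace.single (0 : Fin n) (1 : ℝ)) := by
      rw [smul_sub, mul_smul]
    rw [this, norm_smul, Real.norm_eq_abs, abs_of_pos hs]
    calc s * ‖w - (w 0) • EuclideanSpace.single (0 : Fin n) (1 : ℝ)‖
        < s * (η * w 0) := by exact (mul_lt_mul_iff_right₀ hs).2 hw3
      _ = η * (s * w 0) := by ring

lemma volume_W_ge {η s : ℝ} (hs : 0 < s) :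
    ENNReal.ofReal (s ^ n) * volume (W n η 1) ≤ volume (W n η s) := by
  have := MeasureTheory.Measure.addHaar_smul_of_nonneg (volume : Measure (EucSp n))
    hs.le (W n η 1)
  rw [finrank_euclideanSpace, Fintype.card_fin] at this
  calc ENNReal.ofReal (s ^ n) * volume (W n η 1) = volume (s • W n η 1) := this.symm
    _ ≤ volume (W n η s) := measure_mono (smul_W_subset hs)


/-- The positive constant in the Blumenthal–Getoor–Ray kernel. -/
def C0 (n : ℕ) (α : ℝ) : ℝ :=
  Real.Gamma ((n : ℝ) / 2) * Real.pi ^ (-(n : ℝ) / 2 - 1) * Real.sin (Real.pi * α / 2)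

lemma C0_pos {α : ℝ} (hn : 0 < n) (hα : 0 < α) (hα2 : α < 2) : 0 < C0 n α := by
  have h1 : 0 < Real.Gamma ((n : ℝ) / 2) :=
    Real.Gamma_pos_of_pos (by positivity)
  have h2 : (0:ℝ) < Real.pi ^ (-(n : ℝ) / 2 - 1) :=
    Real.rpow_pos_of_pos Real.pi_pos _
  have h3 : 0 < Real.sin (Real.pi * α / 2) := by
    apply Real.sin_pos_of_pos_of_lt_pi
    · positivity
    · nlinarith [Real.pi_pos]
  exact mul_pos (mul_pos h1 h2) h3

/-- Pointwise lower bound for the Poisson kernel of `B(x,r)` at `x`. -/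
lemma kernel_ge {α : ℝ} (hn : 0 < n) (hα : 0 < α) (hα2 : α < 2) {r b : ℝ} (hr : 0 < r)
    (x y : EucSp n) (h1 : 2 * r ≤ ‖y - x‖) (h2 : ‖y - x‖ ≤ b) :
    C0 n α * (r ^ 2 / b ^ 2) * (b ^ n)⁻¹ ≤ stableBallKernel n α x r x y := by
  set d := ‖y - x‖ with hd
  have hd0 : 0 < d := lt_of_lt_of_le (by linarith) h1
  have hb : 0 < b := lt_of_lt_of_le hd0 h2
  have hcond : r < d := by linarith
  rw [stableBallKernel, if_pos hcond]
  have hxx : ‖x - x‖ = 0 := by simp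
  rw [hxx, ← hd]
  have hden : 0 < d ^ 2 - r ^ 2 := by nlinarith
  set t := (r ^ 2 - 0 ^ 2) / (d ^ 2 - r ^ 2) with ht
  have ht' : t = r ^ 2 / (d ^ 2 - r ^ 2) := by rw [ht]; ring_nf
  have ht0 : 0 < t := by rw [ht']; positivity
  have ht1 : t ≤ 1 := by
    rw [ht', div_le_one hden]; nlinarith
  have step1 : t ≤ t ^ (α / 2) := by
    have := Real.rpow_le_rpow_of_exponent_ge ht0 ht1 (by linarith : α / 2 ≤ 1)
    rwa [Real.rpow_one] at this
  have step2 : r ^ 2 / b ^ 2 ≤ t := by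
    rw [ht']
    apply div_le_div_of_nonneg_left (by positivity) hden
    nlinarith
  have hxy : ‖x - y‖ = d := by rw [hd, norm_sub_rev]
  rw [hxy]
  have e1 : d ^ (-(n : ℝ)) = (d ^ n)⁻¹ := by
    rw [Real.rpow_neg hd0.le, Real.rpow_natCast]
  rw [e1]
  have hC := C0_pos (α := α) hn hα hα2
  rw [show Real.Gamma ((n : ℝ) / 2) * Real.pi ^ (-(n : ℝ) / 2 - 1) *
      Real.sin (Real.pi * α / 2) = C0 n α from rfl]
  have hmono1 : r ^ 2 / b ^ 2 ≤ t ^ (α / 2) := le_trans step2 step1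
  have hmono2 : (b ^ n)⁻¹ ≤ (d ^ n)⁻¹ := by
    apply inv_anti₀ (by positivity)
    exact pow_le_pow_left₀ hd0.le h2 n
  apply mul_le_mul
  · exact mul_le_mul_of_nonneg_left hmono1 hC.le
  · exact hmono2
  · positivity
  · have : 0 ≤ t ^ (α / 2) := Real.rpow_nonneg ht0.le _
    positivity

/-- The harmonic measure has total mass at most 1. -/
lemma hm_univ_le {α : ℝ} (H : StableProcessLaw n α) (U : Set (EucSp n)) (x : EucSp n) :
    H.hm U x Set.univ ≤ 1 := by
  rw [StableProcessLaw.hm]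
  by_cases hf : AEMeasurable (exitPos U) (H.law x)
  · rw [MeasureTheory.Measure.map_apply_of_aemeasurable hf MeasurableSet.univ,
      Set.preimage_univ]
    haveI := H.prob x
    exact le_of_eq measure_univ
  · rw [MeasureTheory.Measure.map_of_not_aemeasurable hf]
    simp

/-- Lower bound for harmonic measure of a set containing `S` on which the kernel is `≥ κ`. -/
lemma hm_ge {α : ℝ} (H : StableProcessLaw n α) {x : EucSp n} {r : ℝ} (hr : 0 < r)
    {A S : Set (EucSp n)} (hA : MeasurableSet A) (hS : MeasurableSet S) (hSA : S ⊆ A)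
    {κ : ℝ} (hκ : ∀ y ∈ S, κ ≤ stableBallKernel n α x r x y) :
    ENNReal.ofReal κ * volume S ≤ H.hm (ball x r) x A := by
  rw [StableProcessLaw.hm, H.ball_exit x r hr x (mem_ball_self hr)]
  calc ENNReal.ofReal κ * volume S
      = ∫⁻ _ in S, ENNReal.ofReal κ ∂volume := (setLIntegral_const S _).symm
    _ ≤ ∫⁻ y in S, ENNReal.ofReal (stableBallKernel n α x r x y) ∂volume :=
        setLIntegral_mono' hS fun y hy => ENNReal.ofReal_le_ofReal (hκ y hy)
    _ = volume.withDensity (fun z => ENNReal.ofReal (stableBallKernel n α x r x z)) S :=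
        (withDensity_apply _ hS).symm
    _ ≤ _ := measure_mono hSA

/-- The translated/rotated cone has the same volume as `W`. -/
lemma volume_cone_preimage (ψ : EucSp n ≃ₗᵢ[ℝ] EucSp n) (z : EucSp n) (η s : ℝ) :
    volume {y : EucSp n | ψ (y - z) ∈ W n η s} = volume (W n η s) := by
  have mp1 : MeasurePreserving (fun y : EucSp n => y - z) volume volume :=
    measurePreserving_sub_right volume z
  have mp2 : MeasurePreserving (ψ : EucSp n → EucSp n) volume volume :=
    ψ.measurePreserving
  have mp : MeasurePreserving (fun y : EucSp n => ψ (y - z)) volume volume :=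
    mp2.comp mp1
  exact mp.measure_preimage (measurableSet_W η s).nullMeasurableSet

end Stmt5Aux

set_option maxHeartbeats 1000000 in
open Stmt5Aux in
/-- **Theorem 2.4.** Let `D` be a bounded domain in `ℝⁿ` (`n ≥ 2`) satisfying the uniform
exterior cone condition, `0 < α < 2`.  If `h` is bounded on `D` and harmonic in `D` with
respect to the killed process `X^D`, then `h ≡ 0` on `D`. -/
theorem stmt5 (n : ℕ) [NeZero n] (hn : 2 ≤ n) (α : ℝ) (hα : 0 < α) (hα2 : α < 2)
    (H : StableProcessLaw n α)
    (D : Set (EucSp n)) (hD : IsBoundedDomain D) (hcone : UniformExteriorCone D)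
    (h : EucSp n → ℝ) (hh : HarmonicWrtKilled H D h)
    (hbd : ∃ C : ℝ, ∀ x ∈ D, |h x| ≤ C) :
    ∀ x ∈ D, h x = 0 := by
  classical
  obtain ⟨hDopen, hDconn, hDbdd⟩ := hD
  obtain ⟨η, ρ, hη, hρ, hconeP⟩ := hcone
  obtain ⟨C, hC⟩ := hbd
  obtain ⟨x₀, hx₀⟩ := hDconn.nonempty
  -- a ball containing `D`
  obtain ⟨R₂, hR₂⟩ := hDbdd.subset_closedBall 0
  set R : ℝ := max R₂ 0 + 1 with hRdef
  have hR : 0 < R := by positivity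
  have hDR : D ⊆ ball 0 R := by
    intro y hy
    have h1 : dist y 0 ≤ R₂ := mem_closedBall.1 (hR₂ hy)
    have h2 : R₂ ≤ max R₂ 0 := le_max_left _ _
    rw [mem_ball]; rw [hRdef]; linarith
  have hwDc : (R • EuclideanSpace.single (0 : Fin n) (1 : ℝ)) ∈ Dᶜ := by
    intro hw
    have := mem_ball_zero_iff.1 (hDR hw)
    rw [norm_smul, Real.norm_eq_abs, abs_of_pos hR] at this
    simp [EuclideanSpace.norm_single] at this
  have hDcne : Dᶜ.Nonempty := ⟨_, hwDc⟩
  -- the supremum of |h|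
  set M : ℝ := sSup ((fun y => |h y|) '' D) with hMdef
  have hbddA : BddAbove ((fun y => |h y|) '' D) := by
    refine ⟨C, ?_⟩; rintro - ⟨y, hy, rfl⟩; exact hC y hy
  have hMle : ∀ y ∈ D, |h y| ≤ M := fun y hy => le_csSup hbddA ⟨y, hy, rfl⟩
  have hM0 : 0 ≤ M := le_trans (abs_nonneg _) (hMle x₀ hx₀)
  -- the constants
  have hnpos : 0 < n := by omega
  have hC0 := C0_pos (n := n) (α := α) hnpos hα hα2
  set V₁ : ℝ := (volume (W n η 1)).toReal with hV₁def
  have hV₁pos : 0 < V₁ :=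
    ENNReal.toReal_pos (volume_W_pos hη one_pos).ne' volume_W_lt_top.ne
  set R₁ : ℝ := 2 * R + ρ with hR₁def
  have hR₁ : 0 < R₁ := by positivity
  set p₁ : ℝ := C0 n α * (1 / 36) * ((2 / 3 : ℝ)) ^ n * V₁ with hp₁def
  set p₂ : ℝ := C0 n α * ((ρ / 4) ^ 2 / R₁ ^ 2) * ((R₁ : ℝ) ^ n)⁻¹ * ((ρ / 2) ^ n * V₁)
    with hp₂def
  have hp₁pos : 0 < p₁ := by rw [hp₁def]; positivity
  have hp₂pos : 0 < p₂ := by rw [hp₂def]; positivity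
  set p : ℝ := min (min p₁ p₂) 2⁻¹ with hpdef
  have hppos : 0 < p := by
    rw [hpdef]; exact lt_min (lt_min hp₁pos hp₂pos) (by norm_num)
  have hp1 : p ≤ 1 := le_trans (min_le_right _ _) (by norm_num)
  have hpp₁ : p ≤ p₁ := le_trans (min_le_left _ _) (min_le_left _ _)
  have hpp₂ : p ≤ p₂ := le_trans (min_le_left _ _) (min_le_right _ _)
  -- the key estimate
  have key : ∀ x ∈ D, |h x| ≤ M * (1 - p) := by
    intro x hx
    set δ : ℝ := infDist x Dᶜ with hδdef
    have hδ : 0 < δ :=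
      ((hDopen.isClosed_compl).notMem_iff_infDist_pos hDcne).1 (by simp [hx])
    obtain ⟨z, hzDc, hzdist⟩ := (hDopen.isClosed_compl).exists_infDist_eq_dist hDcne x
    have hdxz : dist x z = δ := hzdist.symm
    have hballδ : ball x δ ⊆ D := by
      intro y hy
      by_contra hyD
      have h1 : δ ≤ dist x y := infDist_le_dist_of_mem hyD
      rw [mem_ball, dist_comm] at hy
      linarith
    have hzf : z ∈ frontier D := by
      rw [frontier_eq_closure_inter_closure]
      refine ⟨?_, subset_closure hzDc⟩
      rw [Metric.mem_closure_iff]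
      intro ε hε
      set c : ℝ := min (ε / 2) (δ / 2) / δ with hcdef
      have hc0 : 0 < c := by rw [hcdef]; positivity
      have hc2 : c ≤ 1 / 2 := by
        rw [hcdef, div_le_iff₀ hδ]
        calc min (ε / 2) (δ / 2) ≤ δ / 2 := min_le_right _ _
          _ = 1 / 2 * δ := by ring
      refine ⟨z + c • (x - z), ?_, ?_⟩
      · apply hballδ
        rw [mem_ball]
        have : z + c • (x - z) - x = (1 - c) • (z - x) := by
          rw [smul_sub, smul_sub, sub_smul]; simp [sub_smul]; abel
        rw [dist_eq_norm, this, norm_smul, Real.norm_eq_abs,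
          abs_of_pos (by linarith : (0:ℝ) < 1 - c)]
        have hzx : ‖z - x‖ = δ := by rw [← hdxz, dist_comm, dist_eq_norm]
        rw [hzx]
        nlinarith
      · have : z + c • (x - z) - z = c • (x - z) := by abel
        rw [dist_comm, dist_eq_norm, this, norm_smul, Real.norm_eq_abs, abs_of_pos hc0]
        have hxz : ‖x - z‖ = δ := by rw [← hdxz, dist_eq_norm]
        rw [hxz, hcdef, div_mul_cancel₀ _ hδ.ne']
        calc min (ε / 2) (δ / 2) ≤ ε / 2 := min_le_left _ _
          _ < ε := by linarith
    obtain ⟨ψ, hψ⟩ := hconeP z hzf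
    have hδ2R : δ ≤ 2 * R := by
      have h1 : δ ≤ dist x (R • EuclideanSpace.single (0 : Fin n) (1 : ℝ)) :=
        infDist_le_dist_of_mem hwDc
      have h2 : dist x (R • EuclideanSpace.single (0 : Fin n) (1 : ℝ)) ≤ ‖x‖ + R := by
        rw [dist_eq_norm]
        calc ‖x - R • EuclideanSpace.single (0 : Fin n) (1 : ℝ)‖
            ≤ ‖x‖ + ‖R • EuclideanSpace.single (0 : Fin n) (1 : ℝ)‖ := norm_sub_le _ _
          _ = ‖x‖ + R := by
              rw [norm_smul, Real.norm_eq_abs, abs_of_pos hR]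
              simp [EuclideanSpace.norm_single]
      have h3 : ‖x‖ < R := mem_ball_zero_iff.1 (hDR hx)
      linarith
    -- the generic estimate
    have main : ∀ r s b : ℝ, 0 < r → 0 < s → 2 * r ≤ δ → s ≤ ρ → s + δ ≤ b →
        p ≤ C0 n α * (r ^ 2 / b ^ 2) * ((b : ℝ) ^ n)⁻¹ * (s ^ n * V₁) →
        |h x| ≤ M * (1 - p) := by
      intro r s b hr hs hrδ hsρ hsb hplow
      have hb : 0 < b := by linarith
      set S : Set (EucSp n) := {y | ψ (y - z) ∈ W n η s} with hSdef
      have hSmeas : MeasurableSet S := by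
        have hmap : Measurable fun y : EucSp n => ψ (y - z) :=
          (ψ.continuous.comp (continuous_id.sub continuous_const)).measurable
        exact hmap (measurableSet_W η s)
      have hSDc : S ⊆ Dᶜ := by
        intro y hy
        obtain ⟨hw1, hw2, hw3⟩ := hy
        have hyz : ‖y - z‖ < s := by rw [← ψ.norm_map (y - z)]; exact hw1
        refine hψ y ?_ ⟨hw2, hw3⟩
        rw [mem_ball, dist_eq_norm]
        linarith
      have hκ : ∀ y ∈ S, C0 n α * (r ^ 2 / b ^ 2) * ((b : ℝ) ^ n)⁻¹ ≤
          stableBallKernel n α x r x y := by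
        intro y hy
        have hyDc : y ∈ Dᶜ := hSDc hy
        have h1 : δ ≤ ‖y - x‖ := by
          have : infDist x Dᶜ ≤ dist x y := infDist_le_dist_of_mem hyDc
          rw [dist_eq_norm, norm_sub_rev] at this
          exact this
        have h2 : ‖y - x‖ ≤ b := by
          obtain ⟨hw1, -, -⟩ := hy
          have hyz : ‖y - z‖ < s := by rw [← ψ.norm_map (y - z)]; exact hw1
          have hzx : ‖z - x‖ = δ := by rw [← hdxz, dist_comm, dist_eq_norm]
          calc ‖y - x‖ = ‖(y - z) + (z - x)‖ := by abel_nf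
            _ ≤ ‖y - z‖ + ‖z - x‖ := norm_add_le _ _
            _ ≤ s + δ := by rw [hzx]; linarith
            _ ≤ b := hsb
        exact kernel_ge hnpos hα hα2 hr x y (by linarith) h2
      have hv : ENNReal.ofReal (s ^ n * V₁) ≤ volume S := by
        have heq : volume S = volume (W n η s) := volume_cone_preimage ψ z η s
        rw [heq]
        calc ENNReal.ofReal (s ^ n * V₁)
            = ENNReal.ofReal (s ^ n) * ENNReal.ofReal V₁ :=
              ENNReal.ofReal_mul (by positivity)
          _ = ENNReal.ofReal (s ^ n) * volume (W n η 1) := by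
              rw [hV₁def, ENNReal.ofReal_toReal volume_W_lt_top.ne]
          _ ≤ volume (W n η s) := volume_W_ge hs
      set μ := H.hm (ball x r) x with hμdef
      have hmDc : ENNReal.ofReal p ≤ μ Dᶜ := by
        have hκnn : 0 ≤ C0 n α * (r ^ 2 / b ^ 2) * ((b : ℝ) ^ n)⁻¹ := by positivity
        calc ENNReal.ofReal p
            ≤ ENNReal.ofReal (C0 n α * (r ^ 2 / b ^ 2) * ((b : ℝ) ^ n)⁻¹ * (s ^ n * V₁)) :=
              ENNReal.ofReal_le_ofReal hplow
          _ = ENNReal.ofReal (C0 n α * (r ^ 2 / b ^ 2) * ((b : ℝ) ^ n)⁻¹) *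
              ENNReal.ofReal (s ^ n * V₁) := ENNReal.ofReal_mul hκnn
          _ ≤ ENNReal.ofReal (C0 n α * (r ^ 2 / b ^ 2) * ((b : ℝ) ^ n)⁻¹) * volume S :=
              mul_le_mul_right hv _
          _ ≤ μ Dᶜ := hm_ge H hr hDopen.measurableSet.compl hSmeas hSDc hκ
      have hμu : μ Set.univ ≤ 1 := hm_univ_le H _ x
      have hμDfin : μ D ≤ 1 := le_trans (measure_mono (subset_univ D)) hμu
      have hDtoReal : (μ D).toReal ≤ 1 - p := by
        have hsum : μ D + ENNReal.ofReal p ≤ 1 := by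
          calc μ D + ENNReal.ofReal p ≤ μ D + μ Dᶜ := add_le_add_right hmDc _
            _ = μ Set.univ := measure_add_measure_compl hDopen.measurableSet
            _ ≤ 1 := hμu
        have hfin : μ D ≠ ⊤ := (lt_of_le_of_lt hμDfin ENNReal.one_lt_top).ne
        have h1 := ENNReal.toReal_mono ENNReal.one_ne_top hsum
        rw [ENNReal.toReal_add hfin ENNReal.ofReal_ne_top, ENNReal.toReal_ofReal hppos.le,
          ENNReal.toReal_one] at h1
        linarith
      have hcb : closedBall x r ⊆ D := by
        intro y hy
        apply hballδ
        rw [mem_ball]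
        have := mem_closedBall.1 hy
        linarith
      obtain ⟨hint, heq2⟩ := hh.2.2.2 x hx r hr hcb
      haveI : IsFiniteMeasure (μ.restrict D) := by
        constructor
        rw [Measure.restrict_apply_univ]
        exact lt_of_le_of_lt hμDfin ENNReal.one_lt_top
      have hbae : ∀ᵐ y ∂(μ.restrict D), ‖h y‖ ≤ M :=
        (ae_restrict_iff' hDopen.measurableSet).2
          (Filter.Eventually.of_forall fun y hy => by
            rw [Real.norm_eq_abs]; exact hMle y hy)
      have hnormint := norm_integral_le_of_norm_le_const hbae
      rw [Measure.real, Measure.restrict_apply_univ] at hnormint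
      calc |h x| = ‖∫ y in D, h y ∂μ‖ := by rw [← heq2, Real.norm_eq_abs]
        _ ≤ M * (μ D).toReal := hnormint
        _ ≤ M * (1 - p) := mul_le_mul_of_nonneg_left hDtoReal hM0
    rcases le_or_gt δ (ρ / 2) with hcase | hcase
    · -- near the boundary
      refine main (δ / 2) (2 * δ) (3 * δ) (by linarith) (by linarith) (by linarith)
        (by linarith) (by linarith) ?_
      have e1 : ((δ / 2) ^ 2 / (3 * δ) ^ 2 : ℝ) = 1 / 36 := by
        field_simp; ring
      have e2 : (((3 * δ) ^ n : ℝ))⁻¹ * (2 * δ) ^ n = (2 / 3 : ℝ) ^ n := by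
        have h23 : ((2 * δ) / (3 * δ) : ℝ) = 2 / 3 := by
          rw [mul_comm 2 δ, mul_comm 3 δ, mul_div_mul_left _ _ hδ.ne']
        calc (((3 * δ) ^ n : ℝ))⁻¹ * (2 * δ) ^ n = ((2 * δ) / (3 * δ)) ^ n := by
              rw [div_pow]; ring
          _ = (2 / 3 : ℝ) ^ n := by rw [h23]
      calc p ≤ p₁ := hpp₁
        _ = C0 n α * ((δ / 2) ^ 2 / (3 * δ) ^ 2) * (((3 * δ) : ℝ) ^ n)⁻¹ *
            ((2 * δ) ^ n * V₁) := by
            rw [hp₁def, e1, ← e2]; ring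
    · -- away from the boundary
      refine main (ρ / 4) (ρ / 2) R₁ (by linarith) (by linarith) (by linarith)
        (by linarith) (by rw [hR₁def]; linarith) ?_
      calc p ≤ p₂ := hpp₂
        _ = C0 n α * ((ρ / 4) ^ 2 / R₁ ^ 2) * ((R₁ : ℝ) ^ n)⁻¹ * ((ρ / 2) ^ n * V₁) := by
            rw [hp₂def]
  -- conclude
  have hMM : M ≤ M * (1 - p) := by
    have hne : ((fun y => |h y|) '' D).Nonempty := ⟨|h x₀|, ⟨x₀, hx₀, rfl⟩⟩
    exact csSup_le hne (by rintro - ⟨y, hy, rfl⟩; exact key y hy)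
  have hMzero : M ≤ 0 := by nlinarith
  intro x hx
  have h1 : |h x| ≤ 0 := le_trans (hMle x hx) hMzero
  exact abs_eq_zero.1 (le_antisymm h1 (abs_nonneg _))
end
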